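/- There exists an absolute constant C > 0 such that for every integer w ≥ 1, every real R ≥ w³, every center x ∈ ℝ², and every point v ∈ ℝ² with ‖v − x‖₂ = R, the number of lattice points z ∈ ℤ² satisfying ‖z − v‖_∞ ≤ w, ‖z − x‖₂ > R, and ⟨z − v, x − v⟩ > 0 (i.e., z lies strictly outside the disc of radius R about x but strictly on the same side of the tangent line at v as the disc) is at most C·w. -/

import Mathlib

open scoped Classical


/-- Counting lattice points in a slanted strip of normalized width 1,
    when the first normal coordinate is not too small. -/
lemma strip_key (n₁ n₂ v₁ v₂ : ℝ) (hn : 1/4 < n₁^2) (S : Finset (ℤ × ℤ)) (a b : ℤ)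
    (hS : ∀ z ∈ S, z.2 ∈ Finset.Icc a b ∧
      0 < ((z.1 : ℝ) - v₁) * n₁ + ((z.2 : ℝ) - v₂) * n₂ ∧
      ((z.1 : ℝ) - v₁) * n₁ + ((z.2 : ℝ) - v₂) * n₂ < 1) :
    S.card ≤ 2 * (Finset.Icc a b).card := by
  have hne : n₁ ≠ 0 := by intro h; rw [h] at hn; norm_num at hn
  set β : ℤ → ℝ := fun c => v₁ * n₁ - ((c : ℝ) - v₂) * n₂ with hβ
  set m : ℤ → ℤ := fun c => if 0 < n₁ then ⌊β c / n₁⌋ else ⌊(β c + 1) / n₁⌋ with hm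
  have claim : ∀ z ∈ S, m z.2 + 1 ≤ z.1 ∧ z.1 ≤ m z.2 + 2 := by
    intro z hz
    obtain ⟨h2, hlo, hhi⟩ := hS z hz
    have expand : ((z.1 : ℝ) - v₁) * n₁ + ((z.2 : ℝ) - v₂) * n₂
        = (z.1 : ℝ) * n₁ - β z.2 := by simp [hβ]; ring
    rw [expand] at hlo hhi
    have hlo' : β z.2 < (z.1 : ℝ) * n₁ := by linarith
    have hhi' : (z.1 : ℝ) * n₁ < β z.2 + 1 := by linarith
    rcases lt_trichotomy n₁ 0 with hneg | h0 | hpos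
    · have hmz : m z.2 = ⌊(β z.2 + 1) / n₁⌋ := by simp [hm, not_lt.mpr hneg.le, hneg.not_gt]
      have h1 : (β z.2 + 1) / n₁ < (z.1 : ℝ) := by
        rw [div_lt_iff_of_neg hneg]; linarith
      have hmlt : (m z.2 : ℝ) < (z.1 : ℝ) := by
        calc (m z.2 : ℝ) ≤ (β z.2 + 1) / n₁ := by rw [hmz]; exact Int.floor_le _
        _ < _ := h1
      have hlow : m z.2 + 1 ≤ z.1 := by exact_mod_cast Int.add_one_le_iff.mpr (by exact_mod_cast hmlt)
      have hnpos : 1/2 < -n₁ := by nlinarith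
      have hd : (-2 : ℝ) < 1 / n₁ := by
        rw [lt_div_iff_of_neg hneg]; linarith
      have h2' : (z.1 : ℝ) < β z.2 / n₁ := by
        rw [lt_div_iff_of_neg hneg]; linarith
      have heq : β z.2 / n₁ = (β z.2 + 1) / n₁ - 1 / n₁ := by field_simp; ring
      have hfl : (β z.2 + 1) / n₁ < (⌊(β z.2 + 1) / n₁⌋ : ℝ) + 1 := Int.lt_floor_add_one _
      have : (z.1 : ℝ) < (m z.2 : ℝ) + 3 := by
        rw [hmz]; rw [heq] at h2'; push_cast; linarith
      have : z.1 < m z.2 + 3 := by exact_mod_cast this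
      exact ⟨hlow, by omega⟩
    · exact absurd h0 hne
    · have hmz : m z.2 = ⌊β z.2 / n₁⌋ := by simp [hm, hpos]
      have h1 : β z.2 / n₁ < (z.1 : ℝ) := by rw [div_lt_iff₀ hpos]; linarith
      have hmlt : (m z.2 : ℝ) < (z.1 : ℝ) := by
        calc (m z.2 : ℝ) ≤ β z.2 / n₁ := by rw [hmz]; exact Int.floor_le _
        _ < _ := h1
      have hlow : m z.2 + 1 ≤ z.1 := by exact_mod_cast Int.add_one_le_iff.mpr (by exact_mod_cast hmlt)
      have hngt : 1/2 < n₁ := by nlinarith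
      have hd : 1 / n₁ < 2 := by rw [div_lt_iff₀ hpos]; linarith
      have h2' : (z.1 : ℝ) < (β z.2 + 1) / n₁ := by rw [lt_div_iff₀ hpos]; linarith
      have heq : (β z.2 + 1) / n₁ = β z.2 / n₁ + 1 / n₁ := by field_simp
      have hfl : β z.2 / n₁ < (⌊β z.2 / n₁⌋ : ℝ) + 1 := Int.lt_floor_add_one _
      have : (z.1 : ℝ) < (m z.2 : ℝ) + 3 := by rw [hmz]; rw [heq] at h2'; push_cast; linarith
      have : z.1 < m z.2 + 3 := by exact_mod_cast this
      exact ⟨hlow, by omega⟩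
  have hmaps : ∀ z ∈ S, (z.2, z.1 - m z.2) ∈ Finset.Icc a b ×ˢ Finset.Icc (1 : ℤ) 2 := by
    intro z hz
    obtain ⟨h2, _, _⟩ := hS z hz
    obtain ⟨hl, hu⟩ := claim z hz
    simp only [Finset.mem_product, Finset.mem_Icc]
    exact ⟨Finset.mem_Icc.mp h2, by omega, by omega⟩
  have hinj : Set.InjOn (fun z : ℤ × ℤ => (z.2, z.1 - m z.2)) S := by
    intro z hz z' hz' h
    simp only [Prod.mk.injEq] at h
    obtain ⟨h1, h2⟩ := h
    have : z.1 = z'.1 := by rw [h1] at h2; omega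
    exact Prod.ext this h1
  calc S.card ≤ (Finset.Icc a b ×ˢ Finset.Icc (1 : ℤ) 2).card :=
        Finset.card_le_card_of_injOn _ hmaps hinj
  _ = (Finset.Icc a b).card * 2 := by simp [Finset.card_product, Int.card_Icc]
  _ = 2 * (Finset.Icc a b).card := by ring
set_option maxHeartbeats 2000000 in
theorem stmt8 : ∃ C : ℝ, 0 < C ∧ ∀ w : ℕ, 1 ≤ w → ∀ R : ℝ, (w : ℝ)^3 ≤ R →
    ∀ x v : ℝ × ℝ, Real.sqrt ((v.1 - x.1)^2 + (v.2 - x.2)^2) = R →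
    (((Finset.Icc (⌈v.1 - (w : ℝ)⌉, ⌈v.2 - (w : ℝ)⌉) (⌊v.1 + (w : ℝ)⌋, ⌊v.2 + (w : ℝ)⌋)).filter
        (fun z : ℤ × ℤ =>
          |(z.1 : ℝ) - v.1| ≤ w ∧ |(z.2 : ℝ) - v.2| ≤ w ∧
          R < Real.sqrt (((z.1 : ℝ) - x.1)^2 + ((z.2 : ℝ) - x.2)^2) ∧
          0 < ((z.1 : ℝ) - v.1) * (x.1 - v.1) + ((z.2 : ℝ) - v.2) * (x.2 - v.2))).card : ℝ)
      ≤ C * w := by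
  refine ⟨6, by norm_num, ?_⟩
  intro w hw R hR x v hv
  have hw1 : (1 : ℝ) ≤ (w : ℝ) := by exact_mod_cast hw
  have hRw : (w : ℝ) ≤ R := by nlinarith [sq_nonneg (w:ℝ), sq_nonneg ((w:ℝ)-1)]
  have hR0 : (0 : ℝ) < R := by linarith
  have hw2R : (w : ℝ)^2 ≤ R := by nlinarith [sq_nonneg (w:ℝ)]
  have hD : (v.1 - x.1)^2 + (v.2 - x.2)^2 = R^2 := by
    have h0 : (0:ℝ) ≤ (v.1 - x.1)^2 + (v.2 - x.2)^2 := by positivity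
    rw [← hv, Real.sq_sqrt h0]
  set n₁ : ℝ := (x.1 - v.1) / R with hn₁
  set n₂ : ℝ := (x.2 - v.2) / R with hn₂
  have hn : n₁^2 + n₂^2 = 1 := by
    rw [hn₁, hn₂, div_pow, div_pow, ← add_div, div_eq_one_iff_eq (by positivity)]
    nlinarith
  set S := ((Finset.Icc (⌈v.1 - (w : ℝ)⌉, ⌈v.2 - (w : ℝ)⌉) (⌊v.1 + (w : ℝ)⌋, ⌊v.2 + (w : ℝ)⌋)).filter
      (fun z : ℤ × ℤ =>
        |(z.1 : ℝ) - v.1| ≤ w ∧ |(z.2 : ℝ) - v.2| ≤ w ∧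
        R < Real.sqrt (((z.1 : ℝ) - x.1)^2 + ((z.2 : ℝ) - x.2)^2) ∧
        0 < ((z.1 : ℝ) - v.1) * (x.1 - v.1) + ((z.2 : ℝ) - v.2) * (x.2 - v.2))) with hSdef
  -- main analytic estimate for members of S
  have hmem : ∀ z ∈ S, z.1 ∈ Finset.Icc ⌈v.1 - (w : ℝ)⌉ ⌊v.1 + (w : ℝ)⌋ ∧
      z.2 ∈ Finset.Icc ⌈v.2 - (w : ℝ)⌉ ⌊v.2 + (w : ℝ)⌋ ∧
      0 < ((z.1 : ℝ) - v.1) * n₁ + ((z.2 : ℝ) - v.2) * n₂ ∧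
      ((z.1 : ℝ) - v.1) * n₁ + ((z.2 : ℝ) - v.2) * n₂ < 1 := by
    intro z hz
    rw [hSdef, Finset.mem_filter] at hz
    obtain ⟨hbox, h1, h2, hout, hside⟩ := hz
    rw [Finset.mem_Icc, Prod.mk_le_mk, Prod.mk_le_mk] at hbox
    have hz1 : z.1 ∈ Finset.Icc ⌈v.1 - (w : ℝ)⌉ ⌊v.1 + (w : ℝ)⌋ :=
      Finset.mem_Icc.mpr ⟨hbox.1.1, hbox.2.1⟩
    have hz2 : z.2 ∈ Finset.Icc ⌈v.2 - (w : ℝ)⌉ ⌊v.2 + (w : ℝ)⌋ :=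
      Finset.mem_Icc.mpr ⟨hbox.1.2, hbox.2.2⟩
    set P : ℝ := ((z.1 : ℝ) - v.1) * (x.1 - v.1) + ((z.2 : ℝ) - v.2) * (x.2 - v.2) with hP
    have houtsq : R^2 < ((z.1 : ℝ) - x.1)^2 + ((z.2 : ℝ) - x.2)^2 :=
      (Real.lt_sqrt hR0.le).mp hout
    have hq1 : ((z.1 : ℝ) - v.1)^2 ≤ (w : ℝ)^2 := by
      have := abs_le.mp h1; nlinarith [this.1, this.2]
    have hq2 : ((z.2 : ℝ) - v.2)^2 ≤ (w : ℝ)^2 := by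
      have := abs_le.mp h2; nlinarith [this.1, this.2]
    have hiden : ((z.1 : ℝ) - x.1)^2 + ((z.2 : ℝ) - x.2)^2
        = ((z.1 : ℝ) - v.1)^2 + ((z.2 : ℝ) - v.2)^2 - 2 * P
          + ((v.1 - x.1)^2 + (v.2 - x.2)^2) := by rw [hP]; ring
    have hPub : P < (w : ℝ)^2 := by
      rw [hD] at hiden; linarith [houtsq, hq1, hq2]
    have key1 : ((z.1 : ℝ) - v.1) * n₁ + ((z.2 : ℝ) - v.2) * n₂ = P / R := by
      rw [hn₁, hn₂, hP]; field_simp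
    refine ⟨hz1, hz2, ?_, ?_⟩
    · rw [key1]; positivity
    · rw [key1, div_lt_one hR0]; linarith
  -- size of the 1-D intervals
  have hcard1 : (Finset.Icc ⌈v.1 - (w : ℝ)⌉ ⌊v.1 + (w : ℝ)⌋).card ≤ 2 * w + 1 := by
    rw [Int.card_Icc]
    have h1 : (⌈v.1 - (w : ℝ)⌉ : ℝ) ≥ v.1 - w := Int.le_ceil _
    have h2 : (⌊v.1 + (w : ℝ)⌋ : ℝ) ≤ v.1 + w := Int.floor_le _
    have : ⌊v.1 + (w : ℝ)⌋ + 1 - ⌈v.1 - (w : ℝ)⌉ ≤ 2 * (w : ℤ) + 1 := by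
      have : ((⌊v.1 + (w : ℝ)⌋ : ℝ)) + 1 - (⌈v.1 - (w : ℝ)⌉ : ℝ) ≤ 2 * (w : ℝ) + 1 := by linarith
      exact_mod_cast this
    omega
  have hcard2 : (Finset.Icc ⌈v.2 - (w : ℝ)⌉ ⌊v.2 + (w : ℝ)⌋).card ≤ 2 * w + 1 := by
    rw [Int.card_Icc]
    have h1 : (⌈v.2 - (w : ℝ)⌉ : ℝ) ≥ v.2 - w := Int.le_ceil _
    have h2 : (⌊v.2 + (w : ℝ)⌋ : ℝ) ≤ v.2 + w := Int.floor_le _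
    have : ⌊v.2 + (w : ℝ)⌋ + 1 - ⌈v.2 - (w : ℝ)⌉ ≤ 2 * (w : ℤ) + 1 := by
      have : ((⌊v.2 + (w : ℝ)⌋ : ℝ)) + 1 - (⌈v.2 - (w : ℝ)⌉ : ℝ) ≤ 2 * (w : ℝ) + 1 := by linarith
      exact_mod_cast this
    omega
  have hcardS : S.card ≤ 2 * (2 * w + 1) := by
    rcases le_or_gt (n₁^2) (1/2) with hc | hc
    · -- n₂ is large: swap coordinates
      have hn2 : 1/4 < n₂^2 := by nlinarith
      have himg : (S.image Prod.swap).card = S.card :=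
        Finset.card_image_of_injective S Prod.swap_injective
      have := strip_key n₂ n₁ v.2 v.1 hn2 (S.image Prod.swap) ⌈v.1 - (w : ℝ)⌉ ⌊v.1 + (w : ℝ)⌋ ?_
      · calc S.card = (S.image Prod.swap).card := himg.symm
        _ ≤ 2 * (Finset.Icc ⌈v.1 - (w : ℝ)⌉ ⌊v.1 + (w : ℝ)⌋).card := this
        _ ≤ 2 * (2 * w + 1) := by omega
      · intro z hz
        rw [Finset.mem_image] at hz
        obtain ⟨y, hy, hyz⟩ := hz
        obtain ⟨hy1, hy2, hpos, hlt⟩ := hmem y hy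
        subst hyz
        simp only [Prod.snd_swap, Prod.fst_swap]
        exact ⟨hy1, by linarith, by linarith⟩
    · have hn1 : 1/4 < n₁^2 := by nlinarith
      have := strip_key n₁ n₂ v.1 v.2 hn1 S ⌈v.2 - (w : ℝ)⌉ ⌊v.2 + (w : ℝ)⌋ ?_
      · calc S.card ≤ 2 * (Finset.Icc ⌈v.2 - (w : ℝ)⌉ ⌊v.2 + (w : ℝ)⌋).card := this
        _ ≤ 2 * (2 * w + 1) := by omega
      · intro z hz
        obtain ⟨hz1, hz2, hpos, hlt⟩ := hmem z hz
        exact ⟨hz2, hpos, hlt⟩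
  have : (S.card : ℝ) ≤ 2 * (2 * (w : ℝ) + 1) := by exact_mod_cast hcardS
  calc (S.card : ℝ) ≤ 2 * (2 * (w : ℝ) + 1) := this
  _ ≤ 6 * w := by linarith
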